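/- Let 𝐱=(x₁,x₂), 𝐲=(y₁,y₂) be points of the bidisk with x₁≠y₁ and x₂≠y₂, and let γ be a bijective isometry of the bidisk. Suppose E(𝐱,𝐲) ∩ E(𝐱,γ(𝐱)) = ∅ and E(𝐱,𝐲) ∩ E(𝐱,γ⁻¹(𝐱)) = ∅. Then E(𝐱,𝐲) is γ-invisible to 𝐱 if and only if its spine E_0(𝐱,𝐲) is γ-invisible to 𝐱. -/

import Mathlib

open UpperHalfPlane

noncomputable section

/-- The bidisk `ℍ × ℍ` with the `ℓ²` product metric. -/
abbrev Bidisk : Type := WithLp 2 (UpperHalfPlane × UpperHalfPlane)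

/-- Package a pair of points of `ℍ` as a point of the bidisk. -/
def toBD (p : UpperHalfPlane × UpperHalfPlane) : Bidisk := (WithLp.equiv 2 _).symm p

/-- The equidistant hypersurface between two points of the bidisk. -/
def E (z w : Bidisk) : Set Bidisk := {x : Bidisk | dist x z = dist x w}

/-- A point `p` is `γ`-invisible to `x` if `ρ(p,x) > ρ(p,γ(x))` or `ρ(p,x) > ρ(p,γ⁻¹(x))`. -/
def Invisible (γ : Bidisk ≃ᵢ Bidisk) (x p : Bidisk) : Prop :=
  dist p (γ x) < dist p x ∨ dist p (γ.symm x) < dist p x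

open Real

def ach (x : ℝ) : ℝ := Real.log (x + Real.sqrt (x^2 - 1))
lemma ach_cosh {d : ℝ} (hd : 0 ≤ d) : ach (Real.cosh d) = d := by
  unfold ach
  rw [show Real.cosh d ^ 2 - 1 = Real.sinh d ^ 2 by rw [Real.cosh_sq]; ring,
    Real.sqrt_sq (by rwa [Real.sinh_nonneg_iff] : 0 ≤ Real.sinh d),
    Real.cosh_add_sinh, Real.log_exp]

def uu (c w : ℝ) : ℝ := ach (c * Real.cosh w)
def SS (c w : ℝ) : ℝ := Real.sqrt ((c * Real.cosh w)^2 - 1)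
def vv (c w : ℝ) : ℝ := c * Real.sinh w / SS c w
def psi (c w : ℝ) : ℝ := uu c w * vv c w

lemma one_le_mul_cosh {c w : ℝ} (hc : 1 ≤ c) : 1 ≤ c * Real.cosh w :=
  le_trans hc (by nlinarith [Real.one_le_cosh w])

lemma one_lt_mul_cosh {c w : ℝ} (hc : 1 < c) : 1 < c * Real.cosh w :=
  lt_of_lt_of_le hc (by nlinarith [Real.one_le_cosh w])

lemma SS_pos {c w : ℝ} (hc : 1 < c) : 0 < SS c w := by
  have h := one_lt_mul_cosh (w := w) hc
  apply Real.sqrt_pos.2; nlinarith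

lemma SS_sq {c w : ℝ} (hc : 1 ≤ c) : SS c w ^ 2 = (c * Real.cosh w)^2 - 1 := by
  have h := one_le_mul_cosh (w := w) hc
  exact Real.sq_sqrt (by nlinarith)

lemma uu_pos {c w : ℝ} (hc : 1 < c) : 0 < uu c w := by
  have h := one_le_mul_cosh (w := w) hc.le
  have := Real.one_le_cosh w
  apply Real.log_pos
  have : c ≤ c * Real.cosh w := by nlinarith
  calc 1 < c := hc
    _ ≤ c * Real.cosh w := this
    _ ≤ _ := le_add_of_nonneg_right (Real.sqrt_nonneg _)

lemma hasDerivAt_uu {c : ℝ} (hc : 1 < c) (w : ℝ) : HasDerivAt (uu c) (vv c w) w := by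
  have hA : HasDerivAt (fun w => c * Real.cosh w) (c * Real.sinh w) w :=
    (Real.hasDerivAt_cosh w).const_mul c
  have hA2 : HasDerivAt (fun w => (c * Real.cosh w)^2 - 1)
      (2 * (c * Real.cosh w)^1 * (c * Real.sinh w)) w := (hA.pow 2).sub_const 1
  have hSpos : (0:ℝ) < (c * Real.cosh w)^2 - 1 := by
    have h := one_lt_mul_cosh (w := w) hc; nlinarith
  have hS : HasDerivAt (fun w => SS c w)
      (2 * (c * Real.cosh w)^1 * (c * Real.sinh w) / (2 * SS c w)) w :=
    hA2.sqrt (ne_of_gt hSpos)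
  have hsum := hA.add hS
  have hpos : 0 < c * Real.cosh w + SS c w := by
    have h := one_le_mul_cosh (w := w) hc.le
    have := SS_pos (w := w) hc; linarith
  have hlog := hsum.log (ne_of_gt hpos)
  refine hlog.congr_deriv ?_
  have hs := SS_pos (w := w) hc
  have hs2 := SS_sq (w := w) hc.le
  simp only [Pi.add_apply, vv]
  field_simp [vv]
  ring_nf

lemma hasDerivAt_vv {c : ℝ} (hc : 1 < c) (w : ℝ) :
    HasDerivAt (vv c) (c * Real.cosh w * (c^2 - 1) / SS c w ^ 3) w := by
  have hA : HasDerivAt (fun w => c * Real.sinh w) (c * Real.cosh w) w :=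
    (Real.hasDerivAt_sinh w).const_mul c
  have hA2 : HasDerivAt (fun w => (c * Real.cosh w)^2 - 1)
      (2 * (c * Real.cosh w)^1 * (c * Real.sinh w)) w :=
    (((Real.hasDerivAt_cosh w).const_mul c).pow 2).sub_const 1
  have hSpos : (0:ℝ) < (c * Real.cosh w)^2 - 1 := by
    have h := one_lt_mul_cosh (w := w) hc; nlinarith
  have hS : HasDerivAt (fun w => SS c w)
      (2 * (c * Real.cosh w)^1 * (c * Real.sinh w) / (2 * SS c w)) w :=
    hA2.sqrt (ne_of_gt hSpos)
  have hs := SS_pos (w := w) hc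
  have hdiv := hA.div hS (ne_of_gt hs)
  refine hdiv.congr_deriv ?_
  have hs2 := SS_sq (w := w) hc.le
  have hcsq := Real.cosh_sq w
  field_simp
  ring_nf
  linear_combination hs2 + c^2 * hcsq

lemma vv_zero {c : ℝ} : vv c 0 = 0 := by simp [vv]

lemma vv_strictMono {c : ℝ} (hc : 1 < c) : StrictMono (vv c) := by
  apply strictMono_of_deriv_pos
  intro w
  rw [(hasDerivAt_vv hc w).deriv]
  have h1 := SS_pos (w := w) hc
  have h2 := Real.cosh_pos w
  have h3 : (0:ℝ) < c^2 - 1 := by nlinarith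
  positivity

lemma uu_continuous {X : Type*} [TopologicalSpace X] {f g : X → ℝ} (hf : Continuous f)
    (hg : Continuous g) (h1 : ∀ x, 1 ≤ f x) : Continuous fun x => uu (f x) (g x) := by
  have hbase : Continuous fun x => f x * Real.cosh (g x) := hf.mul (Real.continuous_cosh.comp hg)
  have hin : Continuous fun x => f x * Real.cosh (g x) +
      Real.sqrt ((f x * Real.cosh (g x))^2 - 1) :=
    hbase.add (((hbase.pow 2).sub continuous_const).sqrt)
  apply hin.log
  intro x
  have h := one_le_mul_cosh (w := g x) (h1 x)
  have h2 := Real.sqrt_nonneg ((f x * Real.cosh (g x))^2 - 1)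
  exact ne_of_gt (by linarith)

lemma uu_strictMonoOn {c : ℝ} (hc : 1 < c) : StrictMonoOn (uu c) (Set.Ici 0) := by
  apply strictMonoOn_of_deriv_pos (convex_Ici 0)
  · exact (uu_continuous continuous_const continuous_id (fun _ => hc.le)).continuousOn
  · intro w hw
    rw [interior_Ici, Set.mem_Ioi] at hw
    rw [(hasDerivAt_uu hc w).deriv]
    have := SS_pos (w := w) hc
    have := Real.sinh_pos_iff.2 hw
    unfold vv; positivity

lemma uu_even {c w : ℝ} : uu c (-w) = uu c w := by simp [uu, Real.cosh_neg]
lemma vv_odd {c w : ℝ} : vv c (-w) = -(vv c w) := by simp [vv, SS, Real.cosh_neg, neg_div]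
lemma psi_odd {c w : ℝ} : psi c (-w) = -psi c w := by rw [psi, psi, uu_even, vv_odd]; ring

lemma psi_strictMono {c : ℝ} (hc : 1 < c) : StrictMono (psi c) := by
  have key : ∀ w w', 0 ≤ w → w < w' → psi c w < psi c w' := by
    intro w w' hw hww
    have h1 : vv c 0 ≤ vv c w := by
      rcases eq_or_lt_of_le hw with h | h
      · rw [← h]
      · exact ((vv_strictMono hc) h).le
    rw [vv_zero] at h1
    have h2 : vv c w < vv c w' := (vv_strictMono hc) hww
    have h3 : 0 < vv c w' := lt_of_le_of_lt h1 h2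
    have h4 : uu c w < uu c w' := uu_strictMonoOn hc hw (le_trans hw hww.le) hww
    have h5 : 0 < uu c w := uu_pos hc
    unfold psi; nlinarith
  intro w w' hww
  rcases le_or_gt 0 w with hw | hw
  · exact key w w' hw hww
  · rcases lt_or_ge w' 0 with hw' | hw'
    · have := key (-w') (-w) (by linarith) (by linarith)
      rw [psi_odd, psi_odd] at this; linarith
    · rcases eq_or_lt_of_le hw' with h | h
      · have hlt : psi c w < psi c 0 := by
          have h6 : vv c w < 0 := by
            have := (vv_strictMono hc) hw; rwa [vv_zero] at this
          have h5 : 0 < uu c w := uu_pos hc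
          have : psi c 0 = 0 := by simp [psi, vv_zero]
          rw [this]; unfold psi; nlinarith
        rwa [h] at hlt
      · have hA : psi c w < 0 := by
          have h6 : vv c w < 0 := by
            have := (vv_strictMono hc) hw; rwa [vv_zero] at this
          have h5 : 0 < uu c w := uu_pos hc
          unfold psi; nlinarith
        have hB : 0 < psi c w' := by
          have h6 : 0 < vv c w' := by
            have := (vv_strictMono hc) h; rwa [vv_zero] at this
          have h5 : 0 < uu c w' := uu_pos hc
          unfold psi; nlinarith
        linarith

def FF (c a b t : ℝ) : ℝ := uu c (t - a)^2 - uu c (t - b)^2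

lemma uu_one (w : ℝ) : uu 1 w = |w| := by
  unfold uu ach
  rw [one_mul, show Real.cosh w ^ 2 - 1 = Real.sinh w ^2 by rw [Real.cosh_sq]; ring,
    Real.sqrt_sq_eq_abs, Real.abs_sinh, ← Real.cosh_abs w, Real.cosh_add_sinh, Real.log_exp]

lemma FF_strictMono {c a b : ℝ} (hc : 1 ≤ c) (hab : a < b) : StrictMono (FF c a b) := by
  rcases eq_or_lt_of_le hc with h | h
  · intro t t' htt
    simp only [FF, ← h, uu_one, sq_abs]
    nlinarith
  · apply strictMono_of_deriv_pos
    intro t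
    have h1 : HasDerivAt (fun t => t - a) 1 t := (hasDerivAt_id t).sub_const a
    have h2 : HasDerivAt (fun t => t - b) 1 t := (hasDerivAt_id t).sub_const b
    have hu1 : HasDerivAt (fun t => uu c (t - a)) (vv c (t - a)) t := by
      simpa [Function.comp_def] using (hasDerivAt_uu h (t - a)).comp t h1
    have hu2 : HasDerivAt (fun t => uu c (t - b)) (vv c (t - b)) t := by
      simpa [Function.comp_def] using (hasDerivAt_uu h (t - b)).comp t h2
    have hF : HasDerivAt (FF c a b)
        (2 * uu c (t-a)^1 * vv c (t-a) - 2 * uu c (t-b)^1 * vv c (t-b)) t :=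
      (hu1.pow 2).sub (hu2.pow 2)
    rw [hF.deriv]
    have : psi c (t - b) < psi c (t - a) := psi_strictMono h (by linarith)
    simp only [pow_one]
    unfold psi at this; linarith

lemma FF_continuous {c a b : ℝ} (hc : 1 ≤ c) : Continuous (FF c a b) := by
  have h1 : Continuous fun t : ℝ => uu c (t - a) :=
    uu_continuous continuous_const (continuous_id.sub continuous_const) (fun _ => hc)
  have h2 : Continuous fun t : ℝ => uu c (t - b) :=
    uu_continuous continuous_const (continuous_id.sub continuous_const) (fun _ => hc)
  exact (h1.pow 2).sub (h2.pow 2)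

lemma ach_le_ach {A B : ℝ} (hA : 1 ≤ A) (hAB : A ≤ B) : ach A ≤ ach B := by
  unfold ach
  apply Real.log_le_log (by positivity)
  have : Real.sqrt (A^2-1) ≤ Real.sqrt (B^2-1) := Real.sqrt_le_sqrt (by nlinarith)
  linarith

/-- key growth inequality: `ach (c*(K*Y)) ≥ log K + ach (c*Y)` -/
lemma ach_mul_ge {c K Y : ℝ} (hc : 1 ≤ c) (hK : 1 ≤ K) (hY : 1 ≤ Y) :
    Real.log K + ach (c * Y) ≤ ach (c * (K * Y)) := by
  unfold ach
  have hcY : 1 ≤ c * Y := by nlinarith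
  have h1 : (0:ℝ) < c * Y + Real.sqrt ((c*Y)^2 - 1) :=
    lt_of_lt_of_le one_pos (le_trans hcY (le_add_of_nonneg_right (Real.sqrt_nonneg _)))
  rw [← Real.log_mul (by positivity) (ne_of_gt h1)]
  apply Real.log_le_log (by positivity)
  have hsq : K * Real.sqrt ((c*Y)^2 - 1) ≤ Real.sqrt ((c*(K*Y))^2 - 1) := by
    rw [show K * Real.sqrt ((c*Y)^2-1) = Real.sqrt (K^2 * ((c*Y)^2-1)) by
      rw [Real.sqrt_mul (by positivity), Real.sqrt_sq (by linarith)]]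
    apply Real.sqrt_le_sqrt; nlinarith
  calc K * (c * Y + Real.sqrt ((c*Y)^2-1)) = c * (K*Y) + K * Real.sqrt ((c*Y)^2-1) := by ring
    _ ≤ c * (K*Y) + Real.sqrt ((c*(K*Y))^2 - 1) := by linarith

lemma abs_le_uu {c w : ℝ} (hc : 1 ≤ c) : |w| ≤ uu c w := by
  rw [← uu_one]
  unfold uu
  have h1 : Real.cosh w ≤ c * Real.cosh w := by nlinarith [Real.one_le_cosh w]
  rw [one_mul]
  exact ach_le_ach (Real.one_le_cosh w) h1

lemma uu_sub_ge {c a b t : ℝ} (hc : 1 ≤ c) (hab : a < b) (ht : b ≤ t) :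
    Real.log (Real.cosh (b - a)) + uu c (t - b) ≤ uu c (t - a) := by
  have hK : 1 ≤ Real.cosh (b-a) := Real.one_le_cosh _
  have h1 : Real.cosh (b-a) * Real.cosh (t-b) ≤ Real.cosh (t - a) := by
    have e : t - a = (t - b) + (b - a) := by ring
    rw [e, Real.cosh_add]
    nlinarith [Real.sinh_nonneg_iff.2 (show (0:ℝ) ≤ t - b by linarith),
      Real.sinh_nonneg_iff.2 (show (0:ℝ) ≤ b - a by linarith)]
  have h2 := ach_mul_ge (K := Real.cosh (b-a)) (Y := Real.cosh (t-b)) hc hK (Real.one_le_cosh _)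
  have hKY : 1 ≤ Real.cosh (b-a) * Real.cosh (t-b) := by nlinarith [Real.one_le_cosh (t-b)]
  have h3 : ach (c * (Real.cosh (b-a) * Real.cosh (t-b))) ≤ ach (c * Real.cosh (t-a)) := by
    apply ach_le_ach (by nlinarith) (by nlinarith)
  unfold uu
  linarith

lemma FF_reflect {c a b t : ℝ} : FF c a b (a + b - t) = - FF c a b t := by
  have e1 : a + b - t - a = -(t - b) := by ring
  have e2 : a + b - t - b = -(t - a) := by ring
  simp only [FF, e1, e2, uu_even]; ring

lemma FF_ge {c a b t : ℝ} (hc : 1 ≤ c) (hab : a < b) (ht : b ≤ t) :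
    Real.log (Real.cosh (b - a)) * (t - b) ≤ FF c a b t := by
  set K := Real.log (Real.cosh (b-a)) with hK
  have hK0 : 0 ≤ K := Real.log_nonneg (Real.one_le_cosh _)
  have h1 := uu_sub_ge (c := c) (t := t) hc hab ht
  have h2 : t - b ≤ uu c (t - b) := le_trans (le_abs_self _) (abs_le_uu hc)
  have h3 : 0 ≤ uu c (t - b) := le_trans (by linarith) h2
  have : FF c a b t = (uu c (t-a) - uu c (t-b)) * (uu c (t-a) + uu c (t-b)) := by
    unfold FF; ring
  rw [this]
  nlinarith

lemma FF_surj {c a b : ℝ} (hc : 1 ≤ c) (hab : a < b) : Function.Surjective (FF c a b) := by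
  intro k
  have hK : 0 < Real.log (Real.cosh (b-a)) :=
    Real.log_pos (Real.one_lt_cosh.2 (sub_ne_zero.2 (ne_of_gt hab)))
  set K := Real.log (Real.cosh (b-a)) with hKdef
  have hq : 0 < (|k| + 1) / K := by positivity
  have h1 : k ≤ FF c a b (b + (|k| + 1) / K) := by
    have hg := FF_ge (t := b + (|k| + 1) / K) hc hab (by linarith)
    have e : K * (b + (|k| + 1) / K - b) = |k| + 1 := by field_simp; ring
    have hk := le_abs_self k
    linarith [e ▸ hg]
  have h2 : FF c a b (a - (|k| + 1) / K) ≤ k := by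
    have hr : FF c a b (a - (|k|+1)/K) = - FF c a b (a + b - (a - (|k|+1)/K)) := by
      rw [FF_reflect]; ring_nf
    have hge := FF_ge (t := a + b - (a - (|k|+1)/K)) hc hab (by linarith)
    have e : K * ((a + b - (a - (|k|+1)/K)) - b) = |k| + 1 := by field_simp; ring
    have hk := neg_abs_le k
    rw [hr]
    linarith [e ▸ hge]
  have hmm : a - (|k| + 1) / K ≤ b + (|k| + 1) / K := by linarith
  obtain ⟨t, _, ht⟩ := intermediate_value_Icc hmm
    (FF_continuous (a := a) (b := b) hc).continuousOn ⟨h2, h1⟩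
  exact ⟨t, ht⟩

lemma FF_exu {c a b : ℝ} (hc : 1 ≤ c) (hab : a < b) (k : ℝ) : ∃! t, FF c a b t = k := by
  obtain ⟨t, ht⟩ := FF_surj hc hab k
  exact ⟨t, ht, fun t' ht' => (FF_strictMono hc hab).injective (ht'.trans ht.symm)⟩

open UpperHalfPlane Complex

def ang (θ : ℝ) : ℝ := Real.arctan θ + Real.pi / 2

lemma ang_pos (θ : ℝ) : 0 < ang θ := by
  have := Real.neg_pi_div_two_lt_arctan θ; unfold ang; linarith

lemma ang_lt_pi (θ : ℝ) : ang θ < Real.pi := by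
  have := Real.arctan_lt_pi_div_two θ; unfold ang; linarith

lemma sin_ang_pos (θ : ℝ) : 0 < Real.sin (ang θ) :=
  Real.sin_pos_of_pos_of_lt_pi (ang_pos θ) (ang_lt_pi θ)

def cc (θ : ℝ) : ℝ := 1 / Real.sin (ang θ)

lemma one_le_cc (θ : ℝ) : 1 ≤ cc θ := by
  rw [cc, le_div_iff₀ (sin_ang_pos θ), one_mul]; exact Real.sin_le_one _

lemma continuous_cc : Continuous cc :=
  continuous_const.div
    (Real.continuous_sin.comp (Real.continuous_arctan.add continuous_const))
    (fun θ => ne_of_gt (sin_ang_pos θ))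

def ptc (t α : ℝ) : ℂ := ⟨Real.exp t * Real.cos α, Real.exp t * Real.sin α⟩

def ptH (t θ : ℝ) : ℍ :=
  UpperHalfPlane.mk (ptc t (ang θ)) (by
    have := mul_pos (Real.exp_pos t) (sin_ang_pos θ); exact this)

def axisPt (s : ℝ) : ℍ := UpperHalfPlane.mk ⟨0, Real.exp s⟩ (Real.exp_pos s)

lemma dist_ptH (t θ s : ℝ) : dist (ptH t θ) (axisPt s) = uu (cc θ) (t - s) := by
  have hsa := sin_ang_pos θ
  have hcosh : Real.cosh (dist (ptH t θ) (axisPt s)) = cc θ * Real.cosh (t - s) := by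
    rw [UpperHalfPlane.cosh_dist]
    have him1 : (ptH t θ).im = Real.exp t * Real.sin (ang θ) := rfl
    have him2 : (axisPt s).im = Real.exp s := rfl
    have hdist : dist ((ptH t θ) : ℂ) ((axisPt s) : ℂ) ^ 2 =
        (Real.exp t * Real.cos (ang θ))^2 + (Real.exp t * Real.sin (ang θ) - Real.exp s)^2 := by
      have e1 : ((ptH t θ : ℂ)).re = Real.exp t * Real.cos (ang θ) := rfl
      have e2 : ((ptH t θ : ℂ)).im = Real.exp t * Real.sin (ang θ) := rfl
      have e3 : ((axisPt s : ℂ)).re = 0 := rfl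
      have e4 : ((axisPt s : ℂ)).im = Real.exp s := rfl
      rw [Complex.dist_eq, Complex.sq_norm, Complex.normSq_apply, Complex.sub_re,
        Complex.sub_im, e1, e2, e3, e4]
      ring
    have hch : Real.cosh (t - s) = (Real.exp t / Real.exp s + Real.exp s / Real.exp t)/2 := by
      rw [Real.cosh_eq, show -(t-s) = s - t by ring, Real.exp_sub, Real.exp_sub]
    rw [hdist, him1, him2, hch, cc]
    have hca : Real.cos (ang θ)^2 = 1 - Real.sin (ang θ)^2 := by
      rw [← Real.sin_sq_add_cos_sq (ang θ)]; ring
    have hX := Real.exp_pos t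
    have hS := Real.exp_pos s
    field_simp
    ring_nf
    linear_combination (Real.exp t ^ 2) * hca
  have h0 : dist (ptH t θ) (axisPt s) = ach (Real.cosh (dist (ptH t θ) (axisPt s))) :=
    (ach_cosh dist_nonneg).symm
  rw [h0, hcosh]; rfl

lemma ptc_eq (t α : ℝ) : ptc t α = ↑(Real.exp t * Real.cos α) + ↑(Real.exp t * Real.sin α) * Complex.I := by
  apply Complex.ext <;>
    simp only [ptc, Complex.add_re, Complex.add_im, Complex.ofReal_re, Complex.ofReal_im,
      Complex.mul_re, Complex.mul_im, Complex.I_re, Complex.I_im] <;> ring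

lemma std_param {a b : ℝ} (hab : a < b) :
    ∃ P : ℝ × ℝ → ℍ, Continuous P ∧
      (∀ q, dist (P q) (axisPt a) ^ 2 - dist (P q) (axisPt b) ^ 2 = q.2) ∧
      (∀ p : ℍ, ∃ θ, P (θ, dist p (axisPt a) ^ 2 - dist p (axisPt b) ^ 2) = p) := by
  have hTfull := fun q : ℝ × ℝ => FF_exu (one_le_cc q.1) hab q.2
  choose T hT hTu using hTfull
  have hFFc : ∀ l : ℝ, Continuous fun q : ℝ × ℝ => FF (cc q.1) a b l := by
    intro l
    have h1 : Continuous fun q : ℝ × ℝ => uu (cc q.1) (l - a) :=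
      uu_continuous (continuous_cc.comp continuous_fst) continuous_const fun q => one_le_cc q.1
    have h2 : Continuous fun q : ℝ × ℝ => uu (cc q.1) (l - b) :=
      uu_continuous (continuous_cc.comp continuous_fst) continuous_const fun q => one_le_cc q.1
    exact (h1.pow 2).sub (h2.pow 2)
  have hTcont : Continuous T := by
    rw [continuous_iff_continuousAt]; intro q₀
    rw [ContinuousAt, tendsto_order]
    constructor
    · intro l hl
      have hlt : FF (cc q₀.1) a b l < q₀.2 := by
        have h := (FF_strictMono (one_le_cc q₀.1) hab) hl
        rwa [hT q₀] at h
      have hev := ((hFFc l).continuousAt (x := q₀)).eventually_lt continuousAt_snd hlt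
      filter_upwards [hev] with q hq
      by_contra hle
      push_neg at hle
      have h2 := (FF_strictMono (one_le_cc q.1) hab).monotone hle
      rw [hT q] at h2
      linarith
    · intro u' hu
      have hlt : q₀.2 < FF (cc q₀.1) a b u' := by
        have h := (FF_strictMono (one_le_cc q₀.1) hab) hu
        rwa [hT q₀] at h
      have hev := continuousAt_snd.eventually_lt ((hFFc u').continuousAt (x := q₀)) hlt
      filter_upwards [hev] with q hq
      by_contra hle
      push_neg at hle
      have h2 := (FF_strictMono (one_le_cc q.1) hab).monotone hle
      rw [hT q] at h2
      linarith
  refine ⟨fun q => ptH (T q) q.1, ?_, ?_, ?_⟩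
  · have hang : Continuous fun q : ℝ × ℝ => ang q.1 :=
      (Real.continuous_arctan.comp continuous_fst).add continuous_const
    have hcont : Continuous fun q : ℝ × ℝ => ptc (T q) (ang q.1) := by
      simp only [ptc_eq]
      exact (Complex.continuous_ofReal.comp
          (((Real.continuous_exp.comp hTcont)).mul (Real.continuous_cos.comp hang))).add
        ((Complex.continuous_ofReal.comp
          (((Real.continuous_exp.comp hTcont)).mul (Real.continuous_sin.comp hang))).mul
          continuous_const)
    exact hcont.upperHalfPlaneMk _
  · intro q
    rw [dist_ptH, dist_ptH]
    exact hT q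
  · intro p
    have hp0 : (p : ℂ) ≠ 0 := p.ne_zero
    set α := Complex.arg (p : ℂ) with hα
    have him : 0 < (p : ℂ).im := by rw [UpperHalfPlane.coe_im]; exact p.im_pos
    have hαpos : 0 < α := by
      rcases lt_or_eq_of_le (Complex.arg_nonneg_iff.2 him.le) with h | h
      · exact h
      · exfalso
        have := Complex.arg_eq_zero_iff.1 h.symm
        exact (ne_of_gt him) this.2
    have hαlt : α < Real.pi := by
      rcases lt_or_eq_of_le (Complex.arg_le_pi (p : ℂ)) with h | h
      · exact h
      · exfalso
        have := Complex.arg_eq_pi_iff.1 h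
        exact (ne_of_gt him) this.2
    set θp := Real.tan (α - Real.pi / 2) with hθp
    have hangθ : ang θp = α := by
      rw [ang, hθp, Real.arctan_tan (by linarith) (by linarith)]; ring
    set tp := Real.log ‖(p : ℂ)‖ with htp
    have habs : 0 < ‖(p : ℂ)‖ := norm_pos_iff.2 hp0
    have hexp : Real.exp tp = ‖(p : ℂ)‖ := Real.exp_log habs
    have hpt : ptH tp θp = p := by
      apply UpperHalfPlane.ext
      show ptc tp (ang θp) = (p : ℂ)
      rw [hangθ]
      apply Complex.ext
      · show Real.exp tp * Real.cos α = (p : ℂ).re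
        rw [hexp, Complex.cos_arg hp0]
        field_simp
      · show Real.exp tp * Real.sin α = (p : ℂ).im
        rw [hexp, Complex.sin_arg]
        field_simp
    set k := dist p (axisPt a) ^ 2 - dist p (axisPt b) ^ 2 with hk
    have hFk : FF (cc θp) a b tp = k := by
      rw [hk, ← hpt, dist_ptH, dist_ptH]; rfl
    refine ⟨θp, ?_⟩
    show ptH (T (θp, k)) θp = p
    have : tp = T (θp, k) := hTu (θp, k) tp hFk
    rw [← this, hpt]

open MatrixGroups

lemma smul_coe (g : SL(2,ℝ)) (z : ℍ) :
    ((g • z : ℍ) : ℂ) = ((g 0 0 : ℝ) * z + (g 0 1 : ℝ)) / ((g 1 0 : ℝ) * z + (g 1 1 : ℝ)) := by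
  rw [UpperHalfPlane.specialLinearGroup_apply]
  simp [UpperHalfPlane.coe_mk]

def rotM (θ : ℝ) : SL(2,ℝ) := ⟨!![Real.cos θ, Real.sin θ; -Real.sin θ, Real.cos θ], by
  rw [Matrix.det_fin_two_of]; ring_nf; rw [← Real.sin_sq_add_cos_sq θ]; ring⟩

lemma rotM_smul_coe (θ : ℝ) (z : ℍ) : ((rotM θ • z : ℍ) : ℂ) =
    (↑(Real.cos θ) * (z : ℂ) + ↑(Real.sin θ)) / (↑(-Real.sin θ) * (z : ℂ) + ↑(Real.cos θ)) := by
  rw [smul_coe]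
  norm_num [rotM]

lemma rot_denom_ne (θ : ℝ) (w : ℂ) (hw : w.im ≠ 0) :
    (↑(-Real.sin θ) * w + ↑(Real.cos θ) : ℂ) ≠ 0 := by
  intro h
  have him := congrArg Complex.im h
  have hre := congrArg Complex.re h
  simp only [Complex.add_im, Complex.add_re, Complex.mul_im, Complex.mul_re,
    Complex.ofReal_re, Complex.ofReal_im, Complex.zero_im, Complex.zero_re] at him hre
  have hs : Real.sin θ = 0 := by
    rcases mul_eq_zero.1 (by linarith [him] : -Real.sin θ * w.im = 0) with h | h
    · linarith
    · exact absurd h hw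
  rw [hs] at hre
  have hc : Real.cos θ = 0 := by simpa using hre
  have := Real.sin_sq_add_cos_sq θ
  rw [hs, hc] at this; norm_num at this

lemma normalizePair (x y : ℍ) (hxy : x ≠ y) :
    ∃ e : ℍ ≃ᵢ ℍ, ∃ s : ℝ, s ≠ 0 ∧ e x = axisPt 0 ∧ e y = axisPt s := by
  have hv0 : 0 < x.im := x.im_pos
  have hsv : 0 < Real.sqrt x.im := Real.sqrt_pos.2 hv0
  set g₁ : SL(2,ℝ) := ⟨!![1/Real.sqrt x.im, -x.re/Real.sqrt x.im; 0, Real.sqrt x.im], by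
    rw [Matrix.det_fin_two_of]; field_simp; ring⟩ with hg₁
  have hg₁_coe : ∀ z : ℍ, ((g₁ • z : ℍ) : ℂ) = ((z : ℂ) - x.re) / x.im := by
    intro z
    rw [smul_coe]
    have e00 : (g₁ 0 0 : ℝ) = 1/Real.sqrt x.im := by norm_num [hg₁]
    have e01 : (g₁ 0 1 : ℝ) = -x.re/Real.sqrt x.im := by norm_num [hg₁]
    have e10 : (g₁ 1 0 : ℝ) = 0 := by norm_num [hg₁]
    have e11 : (g₁ 1 1 : ℝ) = Real.sqrt x.im := by norm_num [hg₁]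
    rw [e00, e01, e10, e11]
    have hsq : (Real.sqrt x.im : ℂ) * (Real.sqrt x.im : ℂ) = (x.im : ℂ) := by
      rw [← Complex.ofReal_mul, Real.mul_self_sqrt hv0.le]
    have hne : (Real.sqrt x.im : ℂ) ≠ 0 := by
      simpa using ne_of_gt hsv
    have hne2 : (x.im : ℂ) ≠ 0 := by
      simpa using ne_of_gt hv0
    push_cast
    rw [← hsq]
    field_simp
    rw [mul_zero, zero_add, mul_div_cancel_left₀ _ hne]
    ring
  -- the image of x under g₁ is I
  have hg₁x : ((g₁ • x : ℍ) : ℂ) = Complex.I := by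
    rw [hg₁_coe x]
    have : (x : ℂ) - x.re = x.im * Complex.I := by
      apply Complex.ext <;> simp [UpperHalfPlane.coe_re, UpperHalfPlane.coe_im]
    rw [this]
    have hne2 : (x.im : ℂ) ≠ 0 := by simpa using ne_of_gt hv0
    field_simp
  set w : ℂ := ((g₁ • y : ℍ) : ℂ) with hw
  have hwim : 0 < w.im := (g₁ • y).im_pos
  -- find rotation angle
  set φ : ℝ → ℝ := fun θ => ((↑(Real.cos θ) * w + ↑(Real.sin θ)) / (↑(-Real.sin θ) * w + ↑(Real.cos θ))).re with hφ
  have hφcont : Continuous φ := by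
    apply Complex.continuous_re.comp
    apply Continuous.div
    · exact ((Complex.continuous_ofReal.comp Real.continuous_cos).mul continuous_const).add
        (Complex.continuous_ofReal.comp Real.continuous_sin)
    · exact ((Complex.continuous_ofReal.comp (Real.continuous_sin.neg)).mul continuous_const).add
        (Complex.continuous_ofReal.comp Real.continuous_cos)
    · exact fun θ => rot_denom_ne θ w (ne_of_gt hwim)
  have hφ0 : φ 0 = w.re := by simp [hφ]
  have hφpi2 : φ (Real.pi/2) = -w.re / Complex.normSq w := by
    have hwne : w ≠ 0 := fun h => by simp [h] at hwim
    simp only [hφ, Real.cos_pi_div_two, Real.sin_pi_div_two]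
    rw [show ((0:ℝ):ℂ) * w + ((1:ℝ):ℂ) = 1 by push_cast; ring,
      show (↑(-(1:ℝ)) * w + ((0:ℝ):ℂ)) = -w by push_cast; ring]
    rw [div_neg, one_div]
    simp [Complex.inv_re, neg_div]
  have hwne : w ≠ 0 := fun h => by simp [h] at hwim
  have hQ : 0 < Complex.normSq w := Complex.normSq_pos.2 hwne
  have hmem : (0:ℝ) ∈ Set.uIcc (φ 0) (φ (Real.pi/2)) := by
    rw [hφ0, hφpi2]
    rcases le_or_gt 0 w.re with h | h
    · exact Set.mem_uIcc.2 (Or.inr ⟨div_nonpos_iff.2 (Or.inr ⟨by linarith, hQ.le⟩), h⟩)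
    · exact Set.mem_uIcc.2 (Or.inl ⟨h.le, le_of_lt (div_pos (by linarith) hQ)⟩)
  obtain ⟨θ₀, hθmem, hθ₀⟩ := intermediate_value_uIcc hφcont.continuousOn hmem
  set g : SL(2,ℝ) := rotM θ₀ * g₁ with hg
  set e : ℍ ≃ᵢ ℍ := IsometryEquiv.constSMul g with he
  have happ : ∀ z : ℍ, e z = g • z := fun z => rfl
  have hgx : ((g • x : ℍ) : ℂ) = Complex.I := by
    rw [hg, mul_smul, rotM_smul_coe, hg₁x]
    have hden : (↑(-Real.sin θ₀) * Complex.I + ↑(Real.cos θ₀) : ℂ) ≠ 0 :=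
      rot_denom_ne θ₀ Complex.I (by simp)
    rw [div_eq_iff hden]
    apply Complex.ext <;> simp
  have hex : e x = axisPt 0 := by
    rw [happ]
    apply UpperHalfPlane.ext
    rw [hgx]
    apply Complex.ext <;> simp [axisPt, Real.exp_zero, UpperHalfPlane.coe_mk]
  have hgycoe : ((g • y : ℍ) : ℂ) =
      (↑(Real.cos θ₀) * w + ↑(Real.sin θ₀)) / (↑(-Real.sin θ₀) * w + ↑(Real.cos θ₀)) := by
    rw [hg, mul_smul, rotM_smul_coe, hw]
  have hre0 : ((g • y : ℍ) : ℂ).re = 0 := by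
    rw [hgycoe]
    exact hθ₀
  have hgyim : 0 < ((g • y : ℍ) : ℂ).im := by
    rw [UpperHalfPlane.coe_im]; exact (g • y).im_pos
  set s := Real.log ((g • y : ℍ) : ℂ).im with hs
  have hey : e y = axisPt s := by
    rw [happ]
    apply UpperHalfPlane.ext
    apply Complex.ext
    · rw [hre0]; simp [axisPt, UpperHalfPlane.coe_mk]
    · show ((g • y : ℍ) : ℂ).im = (Real.exp s)
      rw [hs, Real.exp_log hgyim]
  refine ⟨e, s, ?_, hex, hey⟩
  intro hs0
  have : axisPt s = axisPt 0 := by rw [hs0]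
  apply hxy
  apply e.injective
  rw [hex, hey, this]

lemma pair_param (x y : ℍ) (hxy : x ≠ y) :
    ∃ P : ℝ × ℝ → ℍ, Continuous P ∧
      (∀ q, dist (P q) x ^ 2 - dist (P q) y ^ 2 = q.2) ∧
      (∀ p : ℍ, ∃ θ, P (θ, dist p x ^ 2 - dist p y ^ 2) = p) := by
  obtain ⟨e, s, hs0, hex, hey⟩ := normalizePair x y hxy
  have hdist : ∀ (z : ℍ) (wq : ℍ), dist (e.symm z) wq = dist z (e wq) := by
    intro z wq
    conv_lhs => rw [← e.dist_eq (e.symm z) wq, e.apply_symm_apply]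
  have hdx : ∀ p : ℍ, dist (e p) (axisPt 0) = dist p x := by
    intro p; rw [← hex, e.dist_eq]
  have hdy : ∀ p : ℍ, dist (e p) (axisPt s) = dist p y := by
    intro p; rw [← hey, e.dist_eq]
  rcases hs0.lt_or_gt with hneg | hpos
  · obtain ⟨P₀, hPc, hPk, hPcov⟩ := std_param hneg
    refine ⟨fun q => e.symm (P₀ (q.1, -q.2)), ?_, ?_, ?_⟩
    · exact e.symm.continuous.comp (hPc.comp (continuous_fst.prodMk continuous_snd.neg))
    · intro q
      rw [hdist, hdist, hex, hey]
      have h := hPk (q.1, -q.2)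
      simp only at h
      linarith
    · intro p
      obtain ⟨θ, hθ⟩ := hPcov (e p)
      refine ⟨θ, ?_⟩
      show e.symm (P₀ (θ, -(dist p x ^ 2 - dist p y ^ 2))) = p
      rw [show -(dist p x ^ 2 - dist p y ^ 2) =
        dist (e p) (axisPt s) ^ 2 - dist (e p) (axisPt 0) ^ 2 by rw [hdx, hdy]; ring]
      rw [hθ, e.symm_apply_apply]
  · obtain ⟨P₀, hPc, hPk, hPcov⟩ := std_param hpos
    refine ⟨fun q => e.symm (P₀ q), ?_, ?_, ?_⟩
    · exact e.symm.continuous.comp hPc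
    · intro q
      rw [hdist, hdist, hex, hey]
      exact hPk q
    · intro p
      obtain ⟨θ, hθ⟩ := hPcov (e p)
      refine ⟨θ, ?_⟩
      show e.symm (P₀ (θ, dist p x ^ 2 - dist p y ^ 2)) = p
      rw [show dist p x ^ 2 - dist p y ^ 2 =
        dist (e p) (axisPt 0) ^ 2 - dist (e p) (axisPt s) ^ 2 by rw [hdx, hdy]]
      rw [hθ, e.symm_apply_apply]

lemma bidisk_dist (u v : Bidisk) :
    dist u v = Real.sqrt (dist u.fst v.fst ^ 2 + dist u.snd v.snd ^ 2) := by
  rw [WithLp.prod_dist_eq_add (p := 2) (by norm_num), Real.sqrt_eq_rpow]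
  norm_num

/-- If `E(𝐱,𝐲)` is disjoint from both `E(𝐱,γ(𝐱))` and `E(𝐱,γ⁻¹(𝐱))`, then `E(𝐱,𝐲)` is
`γ`-invisible to `𝐱` iff its spine `E_0(𝐱,𝐲) = S_0(x₁,y₁) × S_0(y₂,x₂)` is
`γ`-invisible to `𝐱`. -/
theorem invisible_iff_spine_invisible
    (x₁ x₂ y₁ y₂ : UpperHalfPlane) (h₁ : x₁ ≠ y₁) (h₂ : x₂ ≠ y₂)
    (γ : Bidisk ≃ᵢ Bidisk)
    (hdisj₁ : E (toBD (x₁, x₂)) (toBD (y₁, y₂)) ∩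
              E (toBD (x₁, x₂)) (γ (toBD (x₁, x₂))) = ∅)
    (hdisj₂ : E (toBD (x₁, x₂)) (toBD (y₁, y₂)) ∩
              E (toBD (x₁, x₂)) (γ.symm (toBD (x₁, x₂))) = ∅) :
    (∀ p ∈ E (toBD (x₁, x₂)) (toBD (y₁, y₂)), Invisible γ (toBD (x₁, x₂)) p) ↔
    (∀ p₁ p₂ : UpperHalfPlane,
        dist p₁ x₁ ^ 2 - dist p₁ y₁ ^ 2 = 0 →
        dist p₂ y₂ ^ 2 - dist p₂ x₂ ^ 2 = 0 →
        Invisible γ (toBD (x₁, x₂)) (toBD (p₁, p₂))) := by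
  classical
  obtain ⟨P₁, hP₁c, hP₁k, hP₁cov⟩ := pair_param x₁ y₁ h₁
  obtain ⟨P₂, hP₂c, hP₂k, hP₂cov⟩ := pair_param y₂ x₂ h₂.symm
  set X : Bidisk := toBD (x₁, x₂) with hX
  set Y : Bidisk := toBD (y₁, y₂) with hY
  have hmem : ∀ p : Bidisk, p ∈ E X Y ↔
      dist p.fst x₁ ^ 2 - dist p.fst y₁ ^ 2 = dist p.snd y₂ ^ 2 - dist p.snd x₂ ^ 2 := by
    intro p
    show dist p X = dist p Y ↔ _
    rw [bidisk_dist, bidisk_dist, Real.sqrt_inj (by positivity) (by positivity)]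
    have e1 : X.fst = x₁ := rfl
    have e2 : X.snd = x₂ := rfl
    have e3 : Y.fst = y₁ := rfl
    have e4 : Y.snd = y₂ := rfl
    rw [e1, e2, e3, e4]
    constructor <;> intro h <;> linarith
  set Q : ℝ × ℝ × ℝ → Bidisk := fun v => toBD (P₁ (v.1, v.2.2), P₂ (v.2.1, v.2.2)) with hQ
  have hQc : Continuous Q := by
    apply Continuous.comp
    · exact WithLp.prod_continuous_toLp _ _ _
    · exact (hP₁c.comp (continuous_fst.prodMk (continuous_snd.comp continuous_snd))).prodMk
        (hP₂c.comp ((continuous_fst.comp continuous_snd).prodMk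
          (continuous_snd.comp continuous_snd)))
  have hQmem : ∀ v, Q v ∈ E X Y := by
    intro v
    rw [hmem]
    have ha := hP₁k (v.1, v.2.2)
    have hb := hP₂k (v.2.1, v.2.2)
    show dist (P₁ (v.1, v.2.2)) x₁ ^ 2 - dist (P₁ (v.1, v.2.2)) y₁ ^ 2 = _
    rw [ha]
    exact hb.symm
  have hrange : E X Y = Set.range Q := by
    ext p
    constructor
    · intro hp
      rw [hmem] at hp
      obtain ⟨θ₁, hθ₁⟩ := hP₁cov p.fst
      obtain ⟨θ₂, hθ₂⟩ := hP₂cov p.snd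
      refine ⟨(θ₁, θ₂, dist p.fst x₁ ^ 2 - dist p.fst y₁ ^ 2), ?_⟩
      show toBD (P₁ (θ₁, dist p.fst x₁ ^ 2 - dist p.fst y₁ ^ 2),
        P₂ (θ₂, dist p.fst x₁ ^ 2 - dist p.fst y₁ ^ 2)) = p
      rw [hp, hθ₂, ← hp, hθ₁]
      rfl
    · rintro ⟨v, rfl⟩
      exact hQmem v
  have hconn : IsPreconnected (E X Y) := by
    rw [hrange]
    exact (isConnected_range hQc).isPreconnected
  set f : Bidisk → ℝ := fun p => dist p (γ X) - dist p X with hf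
  set g : Bidisk → ℝ := fun p => dist p (γ.symm X) - dist p X with hg
  have hfc : Continuous f := (continuous_id.dist continuous_const).sub
    (continuous_id.dist continuous_const)
  have hgc : Continuous g := (continuous_id.dist continuous_const).sub
    (continuous_id.dist continuous_const)
  have hfne : ∀ p ∈ E X Y, f p ≠ 0 := by
    intro p hp h0
    have hpE : p ∈ E X (γ X) := by
      show dist p X = dist p (γ X)
      have : dist p (γ X) - dist p X = 0 := h0
      linarith
    exact Set.eq_empty_iff_forall_notMem.1 hdisj₁ p ⟨hp, hpE⟩
  have hgne : ∀ p ∈ E X Y, g p ≠ 0 := by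
    intro p hp h0
    have hpE : p ∈ E X (γ.symm X) := by
      show dist p X = dist p (γ.symm X)
      have : dist p (γ.symm X) - dist p X = 0 := h0
      linarith
    exact Set.eq_empty_iff_forall_notMem.1 hdisj₂ p ⟨hp, hpE⟩
  have hinv : ∀ p, Invisible γ X p ↔ f p < 0 ∨ g p < 0 := by
    intro p
    unfold Invisible
    rw [hf, hg]
    constructor <;> intro h <;> rcases h with h | h
    · exact Or.inl (by simp only; linarith)
    · exact Or.inr (by simp only; linarith)
    · simp only at h; exact Or.inl (by linarith)
    · simp only at h; exact Or.inr (by linarith)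
  constructor
  · intro H p₁ p₂ hp1 hp2
    apply H
    rw [hmem]
    show dist p₁ x₁ ^ 2 - dist p₁ y₁ ^ 2 = dist p₂ y₂ ^ 2 - dist p₂ x₂ ^ 2
    rw [hp1, hp2]
  · intro H p hp
    rw [hinv]
    by_contra hni
    push_neg at hni
    obtain ⟨hf0, hg0⟩ := hni
    have hfp : 0 < f p := lt_of_le_of_ne (not_lt.1 (by exact fun h => absurd h hf0.not_gt)) (Ne.symm (hfne p hp))
    have hgp : 0 < g p := lt_of_le_of_ne (not_lt.1 (by exact fun h => absurd h hg0.not_gt)) (Ne.symm (hgne p hp))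
    have hq₁ : dist (P₁ (0, 0)) x₁ ^ 2 - dist (P₁ (0, 0)) y₁ ^ 2 = 0 := hP₁k (0, 0)
    have hq₂ : dist (P₂ (0, 0)) y₂ ^ 2 - dist (P₂ (0, 0)) x₂ ^ 2 = 0 := hP₂k (0, 0)
    have hqinv := H (P₁ (0, 0)) (P₂ (0, 0)) hq₁ hq₂
    set q : Bidisk := toBD (P₁ (0, 0), P₂ (0, 0)) with hq
    have hqE : q ∈ E X Y := by
      rw [hmem]
      show dist (P₁ (0, 0)) x₁ ^ 2 - dist (P₁ (0, 0)) y₁ ^ 2 =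
        dist (P₂ (0, 0)) y₂ ^ 2 - dist (P₂ (0, 0)) x₂ ^ 2
      rw [hq₁, hq₂]
    rw [show Invisible γ (toBD (x₁, x₂)) q = Invisible γ X q from rfl, hinv] at hqinv
    rcases hqinv with hfq | hgq
    · obtain ⟨p', hp', hfp'⟩ := hconn.intermediate_value hqE hp hfc.continuousOn
        ⟨hfq.le, hfp.le⟩
      exact hfne p' hp' hfp'
    · obtain ⟨p', hp', hgp'⟩ := hconn.intermediate_value hqE hp hgc.continuousOn
        ⟨hgq.le, hgp.le⟩
      exact hgne p' hp' hgp'
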